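/- Let μ ≥ 0 be real, s ≥ a + 1 and t ≥ s integers. Then h_μ(t, s) = H_μ(t, s-1)/H_μ(t, a) ≤ 1. If instead -1 < μ < 0, then h_μ(t, s) ≥ 1, with h_0(t,s) = 1. -/

import Mathlib

noncomputable def H (μ : ℝ) (t a : ℤ) : ℝ :=
  Real.Gamma ((t : ℝ) - a + μ) / (Real.Gamma ((t : ℝ) - a) * Real.Gamma (μ + 1))

lemma Gamma_add_nat' (x : ℝ) (hx : 0 < x) (k : ℕ) :
    Real.Gamma (x + k) = Real.Gamma x * ∏ j ∈ Finset.range k, (x + j) := by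
  induction k with
  | zero => simp
  | succ k ih =>
    have h1 : x + ((k + 1 : ℕ) : ℝ) = (x + k) + 1 := by push_cast; ring
    have h2 : x + (k : ℝ) ≠ 0 := by positivity
    rw [h1, Real.Gamma_add_one h2, ih, Finset.prod_range_succ]
    ring

theorem h_ratio_bounds (μ : ℝ) (a s t : ℤ) (hs : a + 1 ≤ s) (ht : s ≤ t) :
    (0 ≤ μ → H μ t (s - 1) / H μ t a ≤ 1) ∧
    (-1 < μ ∧ μ < 0 → 1 ≤ H μ t (s - 1) / H μ t a) ∧
    (μ = 0 → H μ t (s - 1) / H μ t a = 1) := by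
  set x : ℝ := (t : ℝ) - (s : ℝ) + 1 with hxdef
  have hx1 : 1 ≤ x := by
    have : (s : ℝ) ≤ t := by exact_mod_cast ht
    simp only [hxdef]; linarith
  have hx0 : 0 < x := lt_of_lt_of_le one_pos hx1
  set k : ℕ := (s - 1 - a).toNat with hkdef
  have hkz : ((s - 1 - a).toNat : ℤ) = s - 1 - a := Int.toNat_of_nonneg (by omega)
  have hk : (k : ℝ) = (s : ℝ) - 1 - a := by
    have : ((k : ℤ) : ℝ) = ((s - 1 - a : ℤ) : ℝ) := by rw [hkdef, hkz]
    push_cast at this; push_cast; linarith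
  have e1 : (t : ℝ) - ((s - 1 : ℤ) : ℝ) = x := by push_cast; ring
  have e2 : (t : ℝ) - (a : ℝ) = x + k := by rw [hk]; ring
  -- the main ratio computation, valid for μ > -1
  have key : ∀ μ' : ℝ, -1 < μ' →
      H μ' t (s - 1) / H μ' t a =
      (∏ j ∈ Finset.range k, (x + j)) / (∏ j ∈ Finset.range k, (x + μ' + j)) := by
    intro μ' hμ'
    have hxμ : 0 < x + μ' := by linarith
    have hμ1 : 0 < μ' + 1 := by linarith
    have g1 : 0 < Real.Gamma x := Real.Gamma_pos_of_pos hx0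
    have g2 : 0 < Real.Gamma (x + μ') := Real.Gamma_pos_of_pos hxμ
    have g3 : 0 < Real.Gamma (μ' + 1) := Real.Gamma_pos_of_pos hμ1
    have pP : 0 < ∏ j ∈ Finset.range k, (x + (j : ℝ)) := by
      apply Finset.prod_pos; intro j _; positivity
    have pQ : 0 < ∏ j ∈ Finset.range k, (x + μ' + (j : ℝ)) := by
      apply Finset.prod_pos; intro j _; positivity
    have hGk : Real.Gamma (x + k) = Real.Gamma x * ∏ j ∈ Finset.range k, (x + j) :=
      Gamma_add_nat' x hx0 k
    have hGkμ : Real.Gamma (x + k + μ') =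
        Real.Gamma (x + μ') * ∏ j ∈ Finset.range k, (x + μ' + j) := by
      have : x + (k : ℝ) + μ' = (x + μ') + k := by ring
      rw [this, Gamma_add_nat' (x + μ') hxμ k]
    unfold H
    rw [e1, e2, hGk, hGkμ]
    field_simp
  have pP : 0 < ∏ j ∈ Finset.range k, (x + (j : ℝ)) := by
    apply Finset.prod_pos; intro j _; positivity
  refine ⟨?_, ?_, ?_⟩
  · intro hμ
    rw [key μ (by linarith)]
    have pQ : 0 < ∏ j ∈ Finset.range k, (x + μ + (j : ℝ)) := by
      apply Finset.prod_pos; intro j _; positivity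
    rw [div_le_one pQ]
    apply Finset.prod_le_prod
    · intro j _; positivity
    · intro j _; linarith
  · rintro ⟨hμ1, hμ2⟩
    rw [key μ hμ1]
    have pQ : 0 < ∏ j ∈ Finset.range k, (x + μ + (j : ℝ)) := by
      apply Finset.prod_pos; intro j _
      have hj : (0:ℝ) ≤ j := Nat.cast_nonneg j
      linarith
    rw [one_le_div pQ]
    apply Finset.prod_le_prod
    · intro j _
      have hj : (0:ℝ) ≤ j := Nat.cast_nonneg j
      linarith
    · intro j _; linarith
  · intro hμ
    subst hμ
    rw [key 0 (by norm_num)]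
    simp only [add_zero]
    exact div_self pP.ne'
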